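/- arXiv:1503.03032 — 2 statements merged into one kernel-verified Lean document; each statement's English description precedes it below -/
import Mathlib

section
/- Every differential operator D of order 1 and degree q on Ω can be written uniquely as D = L_K + i_L + λ_μ, where K ∈ Ω^q ⊗_S T, L ∈ Ω^{q+1} ⊗_S T are vector valued differential forms, μ ∈ Ω^q, L_K := [i_K, d], and λ_μ is left exterior multiplication by μ. -/
/-!
Common setup: a concrete model of the exterior algebra `Ω` of differential forms over
`S = ℂ[x₁,…,xₙ]`.  An element of `Ω` is encoded as a function assigning to each subset
`I ⊆ {1,…,n}` the polynomial coefficient of `dx_I = dx_{i₁} ∧ … ∧ dx_{i_r}` (indices in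
increasing order).  The `r`-forms are the elements supported on subsets of cardinality `r`.
-/

open MvPolynomial

noncomputable section

/-- The polynomial ring `S = ℂ[x₁,…,xₙ]`. -/
abbrev S (n : ℕ) : Type := MvPolynomial (Fin n) ℂ

/-- The exterior algebra of differential forms over `S`: a form is given by its coefficient
at each basis monomial `dx_I`, `I ⊆ {1,…,n}`. -/
abbrev Ω (n : ℕ) : Type := Finset (Fin n) → S n

variable {n : ℕ}

/-- The sign `(-1)^{#{(i,j) ∈ I × J : j < i}}` arising when reordering `dx_I ∧ dx_J`. -/
def sgnMerge (I J : Finset (Fin n)) : ℤ :=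
  (-1) ^ (∑ i ∈ I, (J.filter (fun j => j < i)).card)

/-- Exterior (wedge) product of forms. -/
def wedge (μ τ : Ω n) : Ω n :=
  fun K => ∑ I ∈ K.powerset, (sgnMerge I (K \ I) : S n) * μ I * τ (K \ I)

/-- Contraction `i_X` with a vector field `X = Σ_k X_k ∂/∂x_k` (given by its components). -/
def contr (X : Fin n → S n) (τ : Ω n) : Ω n :=
  fun J => ∑ k ∈ Jᶜ, ((-1 : S n) ^ (J.filter (fun j => j < k)).card) * X k * τ (insert k J)

/-- The exterior differential `d`. -/
def extd (τ : Ω n) : Ω n :=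
  fun I => ∑ k ∈ I, ((-1 : S n) ^ (I.filter (fun j => j < k)).card) * pderiv k (τ (I.erase k))

/-- The radial vector field `R = Σ_k x_k ∂/∂x_k`. -/
def radial (n : ℕ) : Fin n → S n := fun k => X k

/-- The unit `1 ∈ Ω⁰`. -/
def oneForm (n : ℕ) : Ω n := fun I => if I = ∅ then 1 else 0

/-- A polynomial regarded as a `0`-form. -/
def ofPoly (f : S n) : Ω n := fun I => if I = ∅ then f else 0

/-- The basic `1`-form `dx_k`. -/
def dx (k : Fin n) : Ω n := fun I => if I = {k} then 1 else 0

/-- `τ` is an `r`-form, i.e. `τ ∈ Ω^r`. -/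
def IsForm (τ : Ω n) (r : ℕ) : Prop := ∀ I : Finset (Fin n), I.card ≠ r → τ I = 0

/-- `τ ∈ Ω^z` for an integer `z` (so `τ = 0` when `z < 0`). -/
def IsFormZ (τ : Ω n) (z : ℤ) : Prop := ∀ I : Finset (Fin n), (I.card : ℤ) ≠ z → τ I = 0

/-- `τ ∈ Ω^r(b)`: an `r`-form, homogeneous of total degree `b`, where each `x_i` and each
`dx_i` has degree `1` (this is the grading by the Lie derivative along the radial field). -/
def IsHomogForm (τ : Ω n) (r b : ℕ) : Prop :=
  IsForm τ r ∧ ∀ (I : Finset (Fin n)) (m : Fin n →₀ ℕ),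
    coeff m (τ I) ≠ 0 → (∑ i ∈ m.support, m i) + I.card = b

/-- The coordinate vector field `∂/∂x_k`. -/
def coordVF (n : ℕ) (k : Fin n) : Fin n → S n := fun j => if j = k then 1 else 0

/-- Contraction `i_L` with a vector valued differential form `L ∈ Ω^{q+1} ⊗_S T`,
encoded by its components `L k ∈ Ω^{q+1}` with respect to the basis `∂/∂x_k` of `T`,
so `L = Σ_k (L k) ⊗ ∂/∂x_k` and `i_L τ = Σ_k (L k) ∧ i_{∂/∂x_k} τ`. -/
def vcontr (L : Fin n → Ω n) (τ : Ω n) : Ω n :=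
  ∑ k : Fin n, wedge (L k) (contr (coordVF n k) τ)

/-- The Lie derivative `L_K = [i_K, d] = i_K ∘ d + (-1)^q d ∘ i_K` with respect to a vector
valued form `K ∈ Ω^q ⊗_S T` (here `i_K` has degree `q - 1` and `d` has degree `1`). -/
def lieD (q : ℤ) (K : Fin n → Ω n) (τ : Ω n) : Ω n :=
  vcontr K (extd τ) + ((-1 : ℂ) ^ q) • extd (vcontr K τ)

/-- The identity vector valued `1`-form `Id = Σ_k dx_k ⊗ ∂/∂x_k ∈ Ω¹ ⊗_S T`. -/
def idVF (n : ℕ) : Fin n → Ω n := fun k => dx k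

/-- `D : Ω → Ω` is a (ℂ-linear) derivation of degree `q`. -/
structure IsDerivationOfDegree (D : Ω n → Ω n) (q : ℤ) : Prop where
  map_add : ∀ μ τ : Ω n, D (μ + τ) = D μ + D τ
  map_smul : ∀ (a : ℂ) (τ : Ω n), D (a • τ) = a • D τ
  map_degree : ∀ (r : ℕ) (τ : Ω n), IsForm τ r → IsFormZ (D τ) ((r : ℤ) + q)
  leibniz : ∀ (r : ℕ) (μ τ : Ω n), IsForm μ r →
    D (wedge μ τ) = wedge (D μ) τ + ((-1 : ℂ) ^ ((r : ℤ) * q)) • wedge μ (D τ)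

/-- `D : Ω → Ω` is a differential operator of order `1` and degree `q`, i.e. a ℂ-linear
map of degree `q` with `[[D, λ_μ], λ_τ] = 0` for all `μ, τ ∈ Ω` (stated on homogeneous
`μ ∈ Ω^r`, `τ ∈ Ω^s`, with the graded commutator signs). -/
structure IsDiffOpOfDegree (D : Ω n → Ω n) (q : ℤ) : Prop where
  map_add : ∀ μ τ : Ω n, D (μ + τ) = D μ + D τ
  map_smul : ∀ (a : ℂ) (τ : Ω n), D (a • τ) = a • D τ
  map_degree : ∀ (r : ℕ) (τ : Ω n), IsForm τ r → IsFormZ (D τ) ((r : ℤ) + q)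
  order_one : ∀ (r s : ℕ) (μ τ : Ω n), IsForm μ r → IsForm τ s → ∀ σ : Ω n,
    D (wedge μ (wedge τ σ)) - ((-1 : ℂ) ^ (q * (r : ℤ))) • wedge μ (D (wedge τ σ)) -
      ((-1 : ℂ) ^ ((q + (r : ℤ)) * (s : ℤ))) •
        (wedge τ (D (wedge μ σ)) - ((-1 : ℂ) ^ (q * (r : ℤ))) • wedge τ (wedge μ (D σ))) = 0

/-- The deformed action `f · τ = α(r,b,c)·fτ + β(r,b,c)·df ∧ i_R τ` of a homogeneous
polynomial `f ∈ S(c)` on `τ ∈ Ω^r(b)`, for given scalar families `α`, `β`. -/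
def defAct (α β : ℕ → ℕ → ℕ → ℂ) (r b c : ℕ) (f : S n) (τ : Ω n) : Ω n :=
  α r b c • (f • τ) + β r b c • wedge (extd (ofPoly f)) (contr (radial n) τ)

/-- The differential operator `ω̃₁ ∧ L_Id + ω̃₂ ∧ i_Id + λ_μ̃`, evaluated on `τ ∈ Ω^r`:
`τ ↦ ω̃₁ ∧ dτ + r · ω̃₂ ∧ τ + μ̃ ∧ τ`. -/
def opId (ω₁ ω₂ μ : Ω n) (r : ℕ) (τ : Ω n) : Ω n :=
  wedge ω₁ (extd τ) + (r : ℂ) • wedge ω₂ τ + wedge μ τ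

/-- The quantity `b - a·(r/q + (-1)^q t)`. -/
def denomA (q a : ℕ) (t : ℂ) (r b : ℕ) : ℂ :=
  (b : ℂ) - (a : ℂ) * ((r : ℂ) / (q : ℂ) + (-1 : ℂ) ^ q * t)

/-- `α(r,b,c) = (b - a(r/q + (-1)^q t)) / (b + c - a(r/q + (-1)^q t))`. -/
def alphaA (q a : ℕ) (t : ℂ) (r b c : ℕ) : ℂ :=
  denomA q a t r b / (denomA q a t r b + (c : ℂ))

/-- `β(r,b,c) = α(r,b,c) / (b - a(r/q + (-1)^q t))`. -/
def betaA (q a : ℕ) (t : ℂ) (r b c : ℕ) : ℂ :=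
  alphaA q a t r b c / denomA q a t r b

/-- A linearizable differential operator
`D = ω₁ ∧ L_Id + ((1/q)dω₁ + ω₂) ∧ i_Id + (t·λ_{dω₁} + λ_μ)`, evaluated on `τ ∈ Ω^r`. -/
def linOp (q : ℕ) (t : ℂ) (ω₁ ω₂ μ : Ω n) (r : ℕ) (τ : Ω n) : Ω n :=
  wedge ω₁ (extd τ) + (r : ℂ) • wedge ((q : ℂ)⁻¹ • extd ω₁ + ω₂) τ +
    wedge (t • extd ω₁ + μ) τ

/-- The deformed action linearizing the exterior differential:
`f ·_d τ = (b/(b+c))·(fτ + (1/b)·df ∧ i_R τ)`, with `f ·_d τ = fτ` when `b = 0`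
(in particular when `b = c = 0`). -/
def dotdT (b c : ℕ) (f : S n) (τ : Ω n) : Ω n :=
  if b = 0 then f • τ
  else ((b : ℂ) / ((b : ℂ) + (c : ℂ))) •
    (f • τ + ((b : ℂ))⁻¹ • wedge (extd (ofPoly f)) (contr (radial n) τ))

/-- The deformed action linearizing the exterior differential:
`f ·_d τ = (b/(b+c))·(fτ + (1/b)·df ∧ i_R τ)`, with the usual product when `b = c = 0`. -/
def dotd (b c : ℕ) (f : S n) (τ : Ω n) : Ω n :=
  if b = 0 ∧ c = 0 then f • τ
  else ((b : ℂ) / ((b : ℂ) + (c : ℂ))) •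
    (f • τ + ((b : ℂ))⁻¹ • wedge (extd (ofPoly f)) (contr (radial n) τ))

/-- `κ(r) = (r+1)/2`. -/
def kapC (r : ℕ) : ℂ := ((r : ℂ) + 1) / 2

/-- The differential operator `ω△ : Ω^r → Ω^{r+2}`, `ω△τ = ω ∧ dτ + κ(r)·dω ∧ τ`. -/
def triOp (ω : Ω n) (r : ℕ) (τ : Ω n) : Ω n :=
  wedge ω (extd τ) + kapC r • wedge (extd ω) τ

/-- The deformed action linearizing `ω△`:
`f ·_{ω△} τ = (1/(b+c-κ(r)a))·[(b-κ(r)a)·fτ + df ∧ i_R τ]`. -/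
def triAct (a r b c : ℕ) (f : S n) (τ : Ω n) : Ω n :=
  ((b : ℂ) + (c : ℂ) - kapC r * (a : ℂ))⁻¹ •
    (((b : ℂ) - kapC r * (a : ℂ)) • (f • τ) + wedge (extd (ofPoly f)) (contr (radial n) τ))

/-- The Lie derivative `L_X ω = i_X (dω) + d (i_X ω)` along a vector field `X`. -/
def lieVF (X : Fin n → S n) (ω : Ω n) : Ω n := contr X (extd ω) + extd (contr X ω)

end

noncomputable section
open Finset
variable {n : ℕ}

/-- exponent count for `sgnMerge`. -/
def cnt (I J : Finset (Fin n)) : ℕ := ∑ i ∈ I, (J.filter (fun j => j < i)).card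

lemma sgnMerge_eq (I J : Finset (Fin n)) : sgnMerge I J = (-1 : ℤ) ^ cnt I J := rfl

lemma cnt_empty_left (J : Finset (Fin n)) : cnt ∅ J = 0 := by simp [cnt]
lemma cnt_empty_right (I : Finset (Fin n)) : cnt I ∅ = 0 := by simp [cnt]
lemma cnt_singleton_left (k : Fin n) (J : Finset (Fin n)) :
    cnt {k} J = (J.filter (fun j => j < k)).card := by simp [cnt]

lemma cnt_union_left {A B : Finset (Fin n)} (C : Finset (Fin n)) (h : Disjoint A B) :
    cnt (A ∪ B) C = cnt A C + cnt B C := Finset.sum_union h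

lemma cnt_union_right (A : Finset (Fin n)) {B C : Finset (Fin n)} (h : Disjoint B C) :
    cnt A (B ∪ C) = cnt A B + cnt A C := by
  unfold cnt
  rw [← Finset.sum_add_distrib]
  refine Finset.sum_congr rfl fun i _ => ?_
  rw [Finset.filter_union, Finset.card_union_of_disjoint (Finset.disjoint_filter_filter h)]

lemma cnt_add_cnt {A B : Finset (Fin n)} (h : Disjoint A B) :
    cnt A B + cnt B A = A.card * B.card := by
  unfold cnt
  have hA : ∀ i, (B.filter (fun j => j < i)).card = ∑ j ∈ B, if j < i then 1 else 0 := by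
    intro i; rw [Finset.card_filter]
  have hB : ∀ j, (A.filter (fun i => i < j)).card = ∑ i ∈ A, if i < j then 1 else 0 := by
    intro j; rw [Finset.card_filter]
  simp only [hA, hB]
  rw [Finset.sum_comm (s := B) (t := A)]
  rw [← Finset.sum_add_distrib]
  have : ∀ i ∈ A, ((∑ j ∈ B, if j < i then 1 else 0) + ∑ j ∈ B, if i < j then 1 else 0)
      = B.card := by
    intro i hi
    rw [← Finset.sum_add_distrib]
    rw [Finset.card_eq_sum_ones]
    refine Finset.sum_congr rfl fun j hj => ?_
    have hne : j ≠ i := by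
      intro e; subst e; exact (Finset.disjoint_left.mp h hi) hj
    rcases lt_or_gt_of_ne hne with hlt | hgt
    · simp [hlt, not_lt_of_gt hlt]
    · simp [hgt, not_lt_of_gt hgt]
  rw [Finset.sum_congr rfl this, Finset.sum_const, smul_eq_mul]
/-! ### helper: complex sign smul -/

lemma csmul_eq (e : ℕ) (x : S n) : ((-1 : ℂ) ^ e) • x = (-1 : S n) ^ e * x := by
  rw [MvPolynomial.smul_eq_C_mul, map_pow, map_neg, map_one]

lemma sgS_eq (I J : Finset (Fin n)) : ((sgnMerge I J : ℤ) : S n) = (-1 : S n) ^ cnt I J := by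
  rw [sgnMerge_eq]; push_cast; ring

/-! ### linearity of wedge -/

lemma wedge_add_right (a b c : Ω n) : wedge a (b + c) = wedge a b + wedge a c := by
  funext K; simp only [wedge, Pi.add_apply, ← Finset.sum_add_distrib]
  exact Finset.sum_congr rfl fun I _ => by ring

lemma wedge_add_left (a b c : Ω n) : wedge (a + b) c = wedge a c + wedge b c := by
  funext K; simp only [wedge, Pi.add_apply, ← Finset.sum_add_distrib]
  exact Finset.sum_congr rfl fun I _ => by ring

lemma wedge_smulS_right (f : S n) (a b : Ω n) : wedge a (f • b) = f • wedge a b := by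
  funext K; simp only [wedge, Pi.smul_apply, smul_eq_mul, Finset.mul_sum]
  exact Finset.sum_congr rfl fun I _ => by ring

lemma wedge_smulS_left (f : S n) (a b : Ω n) : wedge (f • a) b = f • wedge a b := by
  funext K; simp only [wedge, Pi.smul_apply, smul_eq_mul, Finset.mul_sum]
  exact Finset.sum_congr rfl fun I _ => by ring

lemma wedge_smulC_right (c : ℂ) (a b : Ω n) : wedge a (c • b) = c • wedge a b := by
  funext K
  simp only [wedge, Pi.smul_apply, MvPolynomial.smul_eq_C_mul, Finset.mul_sum]
  exact Finset.sum_congr rfl fun I _ => by ring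

lemma wedge_smulC_left (c : ℂ) (a b : Ω n) : wedge (c • a) b = c • wedge a b := by
  funext K
  simp only [wedge, Pi.smul_apply, MvPolynomial.smul_eq_C_mul, Finset.mul_sum]
  exact Finset.sum_congr rfl fun I _ => by ring

lemma wedge_zero_right (a : Ω n) : wedge a 0 = 0 := by
  funext K; simp [wedge]

lemma wedge_zero_left (a : Ω n) : wedge 0 a = 0 := by
  funext K; simp [wedge]

/-! ### 0-forms and units -/

lemma wedge_ofPoly_left (f : S n) (σ : Ω n) : wedge (ofPoly f) σ = f • σ := by
  funext K
  rw [wedge, Finset.sum_eq_single (∅ : Finset (Fin n))]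
  · simp [ofPoly, sgS_eq, cnt_empty_left]
  · intro I _ hne; simp [ofPoly, hne]
  · intro h; exact absurd (Finset.empty_mem_powerset K) h

lemma wedge_ofPoly_right (σ : Ω n) (f : S n) : wedge σ (ofPoly f) = f • σ := by
  funext K
  rw [wedge, Finset.sum_eq_single K]
  · simp [ofPoly, sgS_eq, cnt_empty_right]; ring
  · intro I hI hne
    have : K \ I ≠ ∅ := by
      rw [Ne, Finset.sdiff_eq_empty_iff_subset]
      intro hKI
      exact hne (Finset.Subset.antisymm (Finset.mem_powerset.mp hI) hKI)
    simp [ofPoly, this]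
  · intro h; exact absurd (Finset.mem_powerset_self K) h

lemma oneForm_eq_ofPoly : oneForm n = ofPoly (1 : S n) := rfl

lemma wedge_oneForm_right (σ : Ω n) : wedge σ (oneForm n) = σ := by
  rw [oneForm_eq_ofPoly, wedge_ofPoly_right, one_smul]

lemma wedge_oneForm_left (σ : Ω n) : wedge (oneForm n) σ = σ := by
  rw [oneForm_eq_ofPoly, wedge_ofPoly_left, one_smul]
/-! ### associativity -/

lemma wedge_assoc (a b c : Ω n) : wedge (wedge a b) c = wedge a (wedge b c) := by
  funext K
  show ∑ I ∈ K.powerset, (sgnMerge I (K \ I) : S n) *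
      (∑ J ∈ I.powerset, (sgnMerge J (I \ J) : S n) * a J * b (I \ J)) * c (K \ I)
    = ∑ J ∈ K.powerset, (sgnMerge J (K \ J) : S n) * a J *
      (∑ J' ∈ (K \ J).powerset, (sgnMerge J' ((K \ J) \ J') : S n) * b J' * c ((K \ J) \ J'))
  have hL : ∀ I ∈ K.powerset,
      (sgnMerge I (K \ I) : S n) *
        (∑ J ∈ I.powerset, (sgnMerge J (I \ J) : S n) * a J * b (I \ J)) * c (K \ I)
      = ∑ J ∈ I.powerset, (sgnMerge I (K \ I) : S n) *
          ((sgnMerge J (I \ J) : S n) * a J * b (I \ J)) * c (K \ I) := by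
    intro I _; rw [Finset.mul_sum, Finset.sum_mul]
  have hR : ∀ J ∈ K.powerset,
      (sgnMerge J (K \ J) : S n) * a J *
        (∑ J' ∈ (K \ J).powerset, (sgnMerge J' ((K \ J) \ J') : S n) * b J' * c ((K \ J) \ J'))
      = ∑ J' ∈ (K \ J).powerset, (sgnMerge J (K \ J) : S n) * a J *
          ((sgnMerge J' ((K \ J) \ J') : S n) * b J' * c ((K \ J) \ J')) := by
    intro J _; rw [Finset.mul_sum]
  rw [Finset.sum_congr rfl hL, Finset.sum_congr rfl hR]
  rw [Finset.sum_sigma', Finset.sum_sigma']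
  refine Finset.sum_nbij' (fun p => ⟨p.2, p.1 \ p.2⟩) (fun p => ⟨p.1 ∪ p.2, p.1⟩) ?_ ?_ ?_ ?_ ?_
  · rintro ⟨I, J⟩ hp
    simp only [Finset.mem_sigma, Finset.mem_powerset] at hp ⊢
    exact ⟨hp.2.trans hp.1, Finset.sdiff_subset_sdiff hp.1 (le_refl J)⟩
  · rintro ⟨J, J'⟩ hp
    simp only [Finset.mem_sigma, Finset.mem_powerset] at hp ⊢
    constructor
    · exact Finset.union_subset hp.1 (hp.2.trans (Finset.sdiff_subset))
    · exact Finset.subset_union_left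
  · rintro ⟨I, J⟩ hp
    simp only [Finset.mem_sigma, Finset.mem_powerset] at hp
    have : J ∪ I \ J = I := Finset.union_sdiff_of_subset hp.2
    simp [this]
  · rintro ⟨J, J'⟩ hp
    simp only [Finset.mem_sigma, Finset.mem_powerset] at hp
    have hdisj : Disjoint J J' := Finset.disjoint_of_subset_right hp.2 Finset.disjoint_sdiff
    have : (J ∪ J') \ J = J' := Finset.union_sdiff_cancel_left hdisj
    simp [this]
  · rintro ⟨I, J⟩ hp
    simp only [Finset.mem_sigma, Finset.mem_powerset] at hp
    obtain ⟨hIK, hJI⟩ := hp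
    -- K \ J \ (I \ J) = K \ I
    have hset : (K \ J) \ (I \ J) = K \ I := by
      ext x
      simp only [Finset.mem_sdiff]
      constructor
      · rintro ⟨⟨hxK, hxJ⟩, hxIJ⟩
        refine ⟨hxK, fun hxI => hxIJ ⟨hxI, hxJ⟩⟩
      · rintro ⟨hxK, hxI⟩
        exact ⟨⟨hxK, fun hxJ => hxI (hJI hxJ)⟩, fun h => hxI h.1⟩
    -- sign identity
    have hIJ : J ∪ I \ J = I := Finset.union_sdiff_of_subset hJI
    have hKJ : I \ J ∪ K \ I = K \ J := by
      ext x
      simp only [Finset.mem_union, Finset.mem_sdiff]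
      constructor
      · rintro (⟨hxI, hxJ⟩ | ⟨hxK, hxI⟩)
        · exact ⟨hIK hxI, hxJ⟩
        · exact ⟨hxK, fun hxJ => hxI (hJI hxJ)⟩
      · rintro ⟨hxK, hxJ⟩
        by_cases hxI : x ∈ I
        · exact Or.inl ⟨hxI, hxJ⟩
        · exact Or.inr ⟨hxK, hxI⟩
    have d1 : Disjoint J (I \ J) := Finset.disjoint_sdiff
    have d2 : Disjoint (I \ J) (K \ I) :=
      Finset.disjoint_of_subset_left Finset.sdiff_subset Finset.disjoint_sdiff
    have hsgn : cnt I (K \ I) + cnt J (I \ J) = cnt J (K \ J) + cnt (I \ J) (K \ I) := by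
      have e1 : cnt (J ∪ I \ J) (K \ I) = cnt J (K \ I) + cnt (I \ J) (K \ I) :=
        cnt_union_left _ d1
      rw [hIJ] at e1
      have e2 : cnt J (I \ J ∪ K \ I) = cnt J (I \ J) + cnt J (K \ I) :=
        cnt_union_right _ d2
      rw [hKJ] at e2
      omega
    have hs : (sgnMerge I (K \ I) : S n) * (sgnMerge J (I \ J) : S n)
        = (sgnMerge J (K \ J) : S n) * (sgnMerge (I \ J) (K \ I) : S n) := by
      rw [sgS_eq, sgS_eq, sgS_eq, sgS_eq, ← pow_add, ← pow_add, hsgn]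
    show (sgnMerge I (K \ I) : S n) * ((sgnMerge J (I \ J) : S n) * a J * b (I \ J)) * c (K \ I)
      = (sgnMerge J (K \ J) : S n) * a J *
        ((sgnMerge (I \ J) ((K \ J) \ (I \ J)) : S n) * b (I \ J) * c ((K \ J) \ (I \ J)))
    rw [hset]
    calc (sgnMerge I (K \ I) : S n) * ((sgnMerge J (I \ J) : S n) * a J * b (I \ J)) * c (K \ I)
        = ((sgnMerge I (K \ I) : S n) * (sgnMerge J (I \ J) : S n)) * a J * b (I \ J) * c (K \ I) := by
          ring
      _ = ((sgnMerge J (K \ J) : S n) * (sgnMerge (I \ J) (K \ I) : S n)) * a J * b (I \ J) * c (K \ I) := by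
          rw [hs]
      _ = _ := by ring

/-! ### graded commutativity -/

lemma wedge_comm {a b : Ω n} {r s : ℕ} (ha : IsForm a r) (hb : IsForm b s) :
    wedge a b = ((-1 : ℂ) ^ (r * s)) • wedge b a := by
  funext K
  rw [Pi.smul_apply, csmul_eq]
  show ∑ I ∈ K.powerset, (sgnMerge I (K \ I) : S n) * a I * b (K \ I)
    = (-1 : S n) ^ (r * s) * ∑ J ∈ K.powerset, (sgnMerge J (K \ J) : S n) * b J * a (K \ J)
  rw [Finset.mul_sum]
  refine Finset.sum_nbij' (fun I => K \ I) (fun J => K \ J) ?_ ?_ ?_ ?_ ?_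
  · intro I _; exact Finset.mem_powerset.mpr Finset.sdiff_subset
  · intro J _; exact Finset.mem_powerset.mpr Finset.sdiff_subset
  · intro I hI; exact Finset.sdiff_sdiff_eq_self (Finset.mem_powerset.mp hI)
  · intro J hJ; exact Finset.sdiff_sdiff_eq_self (Finset.mem_powerset.mp hJ)
  · intro I hI
    have hIK := Finset.mem_powerset.mp hI
    have hid : K \ (K \ I) = I := Finset.sdiff_sdiff_eq_self hIK
    rw [hid]
    by_cases ha' : a I = 0
    · simp [ha']
    by_cases hb' : b (K \ I) = 0
    · simp [hb']
    have hr : I.card = r := by by_contra h; exact ha' (ha I h)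
    have hs : (K \ I).card = s := by by_contra h; exact hb' (hb _ h)
    have hcc : cnt I (K \ I) + cnt (K \ I) I = r * s := by
      rw [cnt_add_cnt Finset.disjoint_sdiff, hr, hs]
    have hsg : (sgnMerge I (K \ I) : S n) = (-1) ^ (r * s) * (sgnMerge (K \ I) I : S n) := by
      rw [sgS_eq, sgS_eq, ← pow_add]
      have : r * s + cnt (K \ I) I = cnt I (K \ I) + 2 * cnt (K \ I) I := by omega
      rw [this, pow_add, pow_mul]
      norm_num
    rw [hsg]; ring
/-! ### degree lemmas -/

lemma IsFormZ_of_IsForm {a : Ω n} {r : ℕ} (h : IsForm a r) : IsFormZ a (r : ℤ) := by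
  intro I hI; exact h I (fun e => hI (by exact_mod_cast congrArg (Nat.cast : ℕ → ℤ) e))

lemma IsForm_of_IsFormZ {a : Ω n} {r : ℕ} (h : IsFormZ a (r : ℤ)) : IsForm a r := by
  intro I hI; exact h I (by exact_mod_cast hI)

lemma IsFormZ.eq_zero {a : Ω n} {z : ℤ} (h : IsFormZ a z) (hz : z < 0) : a = 0 := by
  funext I; exact h I (by have : (0 : ℤ) ≤ I.card := Int.natCast_nonneg _; omega)

lemma IsFormZ_zero (z : ℤ) : IsFormZ (0 : Ω n) z := fun _ _ => rfl

lemma IsFormZ.add {a b : Ω n} {z : ℤ} (ha : IsFormZ a z) (hb : IsFormZ b z) :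
    IsFormZ (a + b) z := by
  intro I hI; simp [Pi.add_apply, ha I hI, hb I hI]

lemma IsFormZ.sub {a b : Ω n} {z : ℤ} (ha : IsFormZ a z) (hb : IsFormZ b z) :
    IsFormZ (a - b) z := by
  intro I hI; simp [Pi.sub_apply, ha I hI, hb I hI]

lemma IsFormZ.smulC {a : Ω n} {z : ℤ} (c : ℂ) (ha : IsFormZ a z) : IsFormZ (c • a) z := by
  intro I hI; simp [Pi.smul_apply, ha I hI]

lemma IsFormZ.smulS {a : Ω n} {z : ℤ} (f : S n) (ha : IsFormZ a z) : IsFormZ (f • a) z := by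
  intro I hI; simp [Pi.smul_apply, ha I hI]

lemma IsFormZ_wedge {a b : Ω n} {z w : ℤ} (ha : IsFormZ a z) (hb : IsFormZ b w) :
    IsFormZ (wedge a b) (z + w) := by
  intro K hK
  rw [wedge]
  refine Finset.sum_eq_zero fun I hI => ?_
  have hIK := Finset.mem_powerset.mp hI
  by_cases h : (I.card : ℤ) = z
  · have hcard : (K \ I).card = K.card - I.card := Finset.card_sdiff_of_subset hIK
    have hle := Finset.card_le_card hIK
    have : ((K \ I).card : ℤ) ≠ w := by
      rw [hcard, Nat.cast_sub hle]; omega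
    rw [hb _ this, mul_zero]
  · rw [ha I h, mul_zero, zero_mul]

lemma IsFormZ_extd {a : Ω n} {z : ℤ} (ha : IsFormZ a z) : IsFormZ (extd a) (z + 1) := by
  intro I hI
  simp only [extd]
  refine Finset.sum_eq_zero fun k hk => ?_
  have hcard : (I.erase k).card = I.card - 1 := Finset.card_erase_of_mem hk
  have hpos : 1 ≤ I.card := Finset.card_pos.mpr ⟨k, hk⟩
  have : ((I.erase k).card : ℤ) ≠ z := by
    rw [hcard]; push_cast [Nat.cast_sub hpos]; omega
  rw [ha _ this, map_zero, mul_zero]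

lemma IsFormZ_contr {a : Ω n} {z : ℤ} (X : Fin n → S n) (ha : IsFormZ a z) :
    IsFormZ (contr X a) (z - 1) := by
  intro J hJ
  simp only [contr]
  refine Finset.sum_eq_zero fun k hk => ?_
  have hkJ : k ∉ J := by simpa using hk
  have hcard : (insert k J).card = J.card + 1 := Finset.card_insert_of_notMem hkJ
  have : ((insert k J).card : ℤ) ≠ z := by rw [hcard]; push_cast; omega
  rw [ha _ this, mul_zero]

lemma IsFormZ.sum {ι : Type*} (s : Finset ι) (f : ι → Ω n) {z : ℤ}
    (h : ∀ i ∈ s, IsFormZ (f i) z) : IsFormZ (∑ i ∈ s, f i) z := by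
  intro I hI
  rw [Finset.sum_apply]
  exact Finset.sum_eq_zero fun i hi => h i hi I hI

/-! ### basic forms -/

def dxI (I : Finset (Fin n)) : Ω n := fun J => if J = I then 1 else 0

lemma dxI_empty : dxI (∅ : Finset (Fin n)) = oneForm n := rfl

lemma dx_eq_dxI (k : Fin n) : dx k = dxI {k} := rfl

lemma IsForm_dxI (I : Finset (Fin n)) : IsForm (dxI I) I.card := by
  intro J hJ; rw [dxI]; split
  · next h => exact absurd (congrArg Finset.card h) hJ
  · rfl

lemma IsForm_dx (k : Fin n) : IsForm (dx k) 1 := by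
  rw [dx_eq_dxI]; simpa using IsForm_dxI ({k} : Finset (Fin n))

lemma IsForm_ofPoly (f : S n) : IsForm (ofPoly f) 0 := by
  intro J hJ; rw [ofPoly]; split
  · next h => subst h; simp at hJ
  · rfl

lemma IsForm_oneForm : IsForm (oneForm n) 0 := IsForm_ofPoly 1

lemma eq_sum_dxI (τ : Ω n) : τ = ∑ I : Finset (Fin n), τ I • dxI I := by
  funext K
  rw [Finset.sum_apply]
  have : ∀ I : Finset (Fin n), (τ I • dxI I) K = if K = I then τ I else 0 := by
    intro I; rw [Pi.smul_apply, dxI]; split <;> simp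
  rw [Finset.sum_congr rfl fun I _ => this I, Finset.sum_ite_eq (Finset.univ) K τ]
  simp

/-! ### closed forms for dx-wedge and coordinate contraction -/

lemma wedge_dx_apply (k : Fin n) (σ : Ω n) (K : Finset (Fin n)) :
    wedge (dx k) σ K =
      if k ∈ K then (-1 : S n) ^ ((K.filter (fun j => j < k)).card) * σ (K.erase k) else 0 := by
  rw [wedge]
  split
  · next hk =>
    rw [Finset.sum_eq_single_of_mem ({k} : Finset (Fin n))
        (Finset.mem_powerset.mpr (Finset.singleton_subset_iff.mpr hk))]
    · have h1 : K \ {k} = K.erase k := by rw [Finset.erase_eq]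
      have h2 : cnt {k} (K \ {k}) = (K.filter (fun j => j < k)).card := by
        rw [cnt_singleton_left, h1]
        congr 1
        ext j
        simp only [Finset.mem_filter, Finset.mem_erase]
        constructor
        · rintro ⟨⟨hjk, hjK⟩, hlt⟩; exact ⟨hjK, hlt⟩
        · rintro ⟨hjK, hlt⟩; exact ⟨⟨ne_of_lt hlt, hjK⟩, hlt⟩
      rw [sgS_eq, h2, h1, dx]
      simp
    · intro I _ hne
      rw [dx, if_neg hne, mul_zero, zero_mul]
  · next hk =>
    refine Finset.sum_eq_zero fun I hI => ?_
    have : I ≠ {k} := by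
      intro e; subst e
      exact hk (Finset.singleton_subset_iff.mp (Finset.mem_powerset.mp hI))
    rw [dx, if_neg this, mul_zero, zero_mul]

lemma contr_coordVF_apply (k : Fin n) (τ : Ω n) (J : Finset (Fin n)) :
    contr (coordVF n k) τ J =
      if k ∈ J then 0
      else (-1 : S n) ^ ((J.filter (fun j => j < k)).card) * τ (insert k J) := by
  rw [contr]
  split
  · next hk =>
    refine Finset.sum_eq_zero fun m hm => ?_
    have : m ≠ k := by
      intro e; subst e; exact (Finset.mem_compl.mp hm) hk
    rw [coordVF, if_neg this, mul_zero, zero_mul]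
  · next hk =>
    rw [Finset.sum_eq_single_of_mem k (Finset.mem_compl.mpr hk)]
    · rw [coordVF, if_pos rfl, mul_one]
    · intro m _ hne
      rw [coordVF, if_neg hne, mul_zero, zero_mul]
/-! ### sign helpers in `S n` -/

lemma pow_neg_one_mod2 (a : ℕ) : (-1 : S n) ^ a = (-1) ^ (a % 2) := by
  conv_lhs => rw [← Nat.div_add_mod a 2]
  rw [pow_add, pow_mul, neg_one_sq, one_pow, one_mul]

lemma sign_eq_of_mod2 {a b : ℕ} (h : a % 2 = b % 2) : (-1 : S n) ^ a = (-1 : S n) ^ b := by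
  rw [pow_neg_one_mod2, h, ← pow_neg_one_mod2]

lemma sign_neg_of_mod2 {a b : ℕ} (h : a % 2 ≠ b % 2) : (-1 : S n) ^ a = -(-1 : S n) ^ b := by
  rw [pow_neg_one_mod2 a, pow_neg_one_mod2 b]
  rcases Nat.mod_two_eq_zero_or_one a with ha | ha <;>
    rcases Nat.mod_two_eq_zero_or_one b with hb | hb <;>
      simp_all

/-! ### filter card helpers -/

lemma card_filter_insert {j : Fin n} (k : Fin n) {J : Finset (Fin n)} (hj : j ∉ J) :
    ((insert j J).filter (fun x => x < k)).card
      = (if j < k then 1 else 0) + (J.filter (fun x => x < k)).card := by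
  rw [Finset.filter_insert]
  split
  · rw [Finset.card_insert_of_notMem (fun hh => hj (Finset.mem_filter.mp hh).1)]
    omega
  · omega

lemma card_filter_of_erase {j : Fin n} (k : Fin n) {J : Finset (Fin n)} (hj : j ∈ J) :
    (J.filter (fun x => x < k)).card
      = (if j < k then 1 else 0) + ((J.erase j).filter (fun x => x < k)).card := by
  conv_lhs => rw [← Finset.insert_erase hj]
  exact card_filter_insert k (Finset.notMem_erase j J)

/-! ### linearity of contr and extd -/

lemma contr_add (X : Fin n → S n) (a b : Ω n) : contr X (a + b) = contr X a + contr X b := by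
  funext J; simp only [contr, Pi.add_apply, ← Finset.sum_add_distrib]
  exact Finset.sum_congr rfl fun k _ => by ring

lemma contr_smulS (X : Fin n → S n) (f : S n) (a : Ω n) : contr X (f • a) = f • contr X a := by
  funext J; simp only [contr, Pi.smul_apply, smul_eq_mul, Finset.mul_sum]
  exact Finset.sum_congr rfl fun k _ => by ring

lemma contr_smulC (X : Fin n → S n) (c : ℂ) (a : Ω n) : contr X (c • a) = c • contr X a := by
  funext J
  simp only [contr, Pi.smul_apply, MvPolynomial.smul_eq_C_mul, Finset.mul_sum]
  exact Finset.sum_congr rfl fun k _ => by ring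

lemma contr_zero (X : Fin n → S n) : contr X (0 : Ω n) = 0 := by
  funext J; simp [contr]

lemma extd_add (a b : Ω n) : extd (a + b) = extd a + extd b := by
  funext I; simp only [extd, Pi.add_apply, map_add, ← Finset.sum_add_distrib]
  exact Finset.sum_congr rfl fun k _ => by ring

lemma extd_smulC (c : ℂ) (a : Ω n) : extd (c • a) = c • extd a := by
  funext I
  simp only [extd, Pi.smul_apply, MvPolynomial.smul_eq_C_mul, Finset.mul_sum]
  refine Finset.sum_congr rfl fun k _ => ?_
  rw [MvPolynomial.pderiv_C_mul]; ring

lemma extd_zero : extd (0 : Ω n) = 0 := by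
  funext I; simp [extd]

lemma vcontr_add (M : Fin n → Ω n) (a b : Ω n) :
    vcontr M (a + b) = vcontr M a + vcontr M b := by
  simp only [vcontr, contr_add, wedge_add_right, Finset.sum_add_distrib]

lemma vcontr_smulC (M : Fin n → Ω n) (c : ℂ) (a : Ω n) :
    vcontr M (c • a) = c • vcontr M a := by
  simp only [vcontr, contr_smulC, wedge_smulC_right, Finset.smul_sum]

lemma vcontr_smulS (M : Fin n → Ω n) (f : S n) (a : Ω n) :
    vcontr M (f • a) = f • vcontr M a := by
  simp only [vcontr, contr_smulS, wedge_smulS_right, Finset.smul_sum]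

lemma vcontr_zero (M : Fin n → Ω n) : vcontr M (0 : Ω n) = 0 := by
  simp only [vcontr, contr_zero, wedge_zero_right, Finset.sum_const_zero]

/-! ### single-site identities -/

lemma contr_wedge_dx (k j : Fin n) (σ : Ω n) :
    contr (coordVF n k) (wedge (dx j) σ)
      = (if j = k then σ else 0) - wedge (dx j) (contr (coordVF n k) σ) := by
  funext J
  rw [Pi.sub_apply]
  have hite : (if j = k then σ else 0) J = if j = k then σ J else 0 := by
    split <;> rfl
  rw [hite]
  by_cases hjk : j = k
  · subst hjk
    rw [if_pos rfl]
    by_cases hk : j ∈ J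
    · have e1 : contr (coordVF n j) (wedge (dx j) σ) J = 0 := by
        rw [contr_coordVF_apply, if_pos hk]
      have e2 : wedge (dx j) (contr (coordVF n j) σ) J = σ J := by
        rw [wedge_dx_apply, if_pos hk, contr_coordVF_apply,
          if_neg (Finset.notMem_erase j J), Finset.insert_erase hk]
        have h2 : ((J.erase j).filter (fun x => x < j)).card
            = (J.filter (fun x => x < j)).card := by
          have h3 := card_filter_of_erase j hk
          rw [if_neg (lt_irrefl j)] at h3
          omega
        rw [h2, ← mul_assoc, ← pow_add,
          sign_eq_of_mod2 (b := 0) (by omega), pow_zero, one_mul]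
      rw [e1, e2]; ring
    · have e1 : contr (coordVF n j) (wedge (dx j) σ) J = σ J := by
        rw [contr_coordVF_apply, if_neg hk, wedge_dx_apply,
          if_pos (Finset.mem_insert_self j J), Finset.erase_insert hk]
        have h2 : ((insert j J).filter (fun x => x < j)).card
            = (J.filter (fun x => x < j)).card := by
          rw [card_filter_insert j hk, if_neg (lt_irrefl j), zero_add]
        rw [h2, ← mul_assoc, ← pow_add,
          sign_eq_of_mod2 (b := 0) (by omega), pow_zero, one_mul]
      have e2 : wedge (dx j) (contr (coordVF n j) σ) J = 0 := by
        rw [wedge_dx_apply, if_neg hk]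
      rw [e1, e2]; ring
  · rw [if_neg hjk]
    by_cases hk : k ∈ J
    · have e1 : contr (coordVF n k) (wedge (dx j) σ) J = 0 := by
        rw [contr_coordVF_apply, if_pos hk]
      have e2 : wedge (dx j) (contr (coordVF n k) σ) J = 0 := by
        rw [wedge_dx_apply]
        by_cases hj : j ∈ J
        · rw [if_pos hj, contr_coordVF_apply,
            if_pos (Finset.mem_erase.mpr ⟨fun e => hjk e.symm, hk⟩), mul_zero]
        · rw [if_neg hj]
      rw [e1, e2]; ring
    · by_cases hj : j ∈ J
      · have hjik : j ∈ insert k J := Finset.mem_insert_of_mem hj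
        have hkej : k ∉ J.erase j := fun h => hk (Finset.mem_erase.mp h).2
        have hins : (insert k J).erase j = insert k (J.erase j) :=
          Finset.erase_insert_of_ne (fun e => hjk e.symm)
        have e1 : contr (coordVF n k) (wedge (dx j) σ) J
            = (-1 : S n) ^ ((J.filter (fun x => x < k)).card
                + ((insert k J).filter (fun x => x < j)).card)
              * σ (insert k (J.erase j)) := by
          rw [contr_coordVF_apply, if_neg hk, wedge_dx_apply, if_pos hjik, hins,
            pow_add]
          ring
        have e2 : wedge (dx j) (contr (coordVF n k) σ) J
            = (-1 : S n) ^ ((J.filter (fun x => x < j)).card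
                + ((J.erase j).filter (fun x => x < k)).card)
              * σ (insert k (J.erase j)) := by
          rw [wedge_dx_apply, if_pos hj, contr_coordVF_apply, if_neg hkej, pow_add]
          ring
        have hpar : ((J.filter (fun x => x < k)).card
              + ((insert k J).filter (fun x => x < j)).card) % 2
            ≠ ((J.filter (fun x => x < j)).card
              + ((J.erase j).filter (fun x => x < k)).card) % 2 := by
          have e3 : ((insert k J).filter (fun x => x < j)).card
              = (if k < j then 1 else 0) + (J.filter (fun x => x < j)).card :=
            card_filter_insert j hk
          have e4 : (J.filter (fun x => x < k)).card
              = (if j < k then 1 else 0) + ((J.erase j).filter (fun x => x < k)).card :=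
            card_filter_of_erase k hj
          rcases lt_or_gt_of_ne (show j ≠ k from hjk) with h | h
          · rw [e3, e4, if_pos h, if_neg (not_lt_of_gt h)]; omega
          · rw [e3, e4, if_neg (not_lt_of_gt h), if_pos h]; omega
        rw [e1, e2, sign_neg_of_mod2 hpar]
        ring
      · have e1 : contr (coordVF n k) (wedge (dx j) σ) J = 0 := by
          rw [contr_coordVF_apply, if_neg hk, wedge_dx_apply]
          have : j ∉ insert k J := by
            intro h; rcases Finset.mem_insert.mp h with h | h
            · exact hjk h
            · exact hj h
          rw [if_neg this, mul_zero]
        have e2 : wedge (dx j) (contr (coordVF n k) σ) J = 0 := by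
          rw [wedge_dx_apply, if_neg hj]
        rw [e1, e2]; ring
/-! ### more closed computations -/

lemma wedge_sum_left {ι : Type*} (s : Finset ι) (a : ι → Ω n) (b : Ω n) :
    wedge (∑ i ∈ s, a i) b = ∑ i ∈ s, wedge (a i) b := by
  induction s using Finset.cons_induction with
  | empty => simp [wedge_zero_left]
  | cons i s hi ih => simp [Finset.sum_cons, wedge_add_left, ih]

lemma wedge_sum_right {ι : Type*} (s : Finset ι) (a : Ω n) (b : ι → Ω n) :
    wedge a (∑ i ∈ s, b i) = ∑ i ∈ s, wedge a (b i) := by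
  induction s using Finset.cons_induction with
  | empty => simp [wedge_zero_right]
  | cons i s hi ih => simp [Finset.sum_cons, wedge_add_right, ih]

lemma extd_dxI (I : Finset (Fin n)) : extd (dxI I) = 0 := by
  funext K
  simp only [extd, dxI, Pi.zero_apply]
  refine Finset.sum_eq_zero fun k _ => ?_
  split <;> simp

lemma extd_oneForm : extd (oneForm n) = 0 := extd_dxI ∅

lemma extd_dx (k : Fin n) : extd (dx k) = 0 := extd_dxI {k}

lemma contr_ofPoly (X : Fin n → S n) (f : S n) : contr X (ofPoly f) = 0 := by
  funext J
  simp only [contr, ofPoly, Pi.zero_apply]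
  refine Finset.sum_eq_zero fun k _ => ?_
  rw [if_neg (Finset.insert_ne_empty k J)]
  ring

lemma contr_oneForm (X : Fin n → S n) : contr X (oneForm n) = 0 := by
  rw [oneForm_eq_ofPoly]; exact contr_ofPoly X 1

lemma extd_ofPoly (f : S n) : extd (ofPoly f) = ∑ k, pderiv k f • dx k := by
  funext I
  rw [Finset.sum_apply]
  by_cases h0 : I = ∅
  · subst h0
    simp only [extd, Finset.sum_empty, Pi.smul_apply, dx, smul_eq_mul]
    rw [eq_comm]
    refine Finset.sum_eq_zero fun k _ => ?_
    rw [if_neg (Ne.symm (Finset.singleton_ne_empty k)), mul_zero]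
  · rcases Finset.nonempty_iff_ne_empty.mpr h0 with ⟨m, hm⟩
    by_cases h1 : I = {m}
    · subst h1
      simp only [extd]
      rw [Finset.sum_singleton, Finset.erase_singleton]
      have : ofPoly (n := n) f ∅ = f := by rw [ofPoly, if_pos rfl]
      rw [this]
      have hf : ({m} : Finset (Fin n)).filter (fun j => j < m) = ∅ := by
        ext x; simp only [Finset.mem_filter, Finset.mem_singleton, Finset.notMem_empty,
          iff_false, not_and]
        rintro rfl; exact lt_irrefl x
      rw [hf]
      simp only [Finset.card_empty, pow_zero, one_mul]
      rw [Finset.sum_eq_single m]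
      · rw [Pi.smul_apply, dx, if_pos rfl, smul_eq_mul, mul_one]
      · intro k _ hk
        rw [Pi.smul_apply, dx, if_neg (fun h => hk (by
          have := Finset.singleton_injective h; exact this.symm)), smul_eq_mul, mul_zero]
      · intro h; exact absurd (Finset.mem_univ m) h
    · -- I has at least two elements
      have h2 : ∀ k ∈ I, I.erase k ≠ ∅ := by
        intro k hk he
        rcases Finset.nonempty_iff_ne_empty.mpr h0 with ⟨x, hx⟩
        have : I ⊆ {k} := by
          intro y hy
          by_contra hyk
          have : y ∈ I.erase k := Finset.mem_erase.mpr ⟨by simpa using hyk, hy⟩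
          simp [he] at this
        have : I = {k} := Finset.Subset.antisymm this (Finset.singleton_subset_iff.mpr hk)
        exact h1 (by
          have hmk : m = k := by
            have := this ▸ hm; simpa using this
          rw [this, hmk])
      have eL : extd (ofPoly f) I = 0 := by
        simp only [extd]
        refine Finset.sum_eq_zero fun k hk => ?_
        rw [ofPoly, if_neg (h2 k hk)]
        simp
      rw [eL, eq_comm]
      refine Finset.sum_eq_zero fun k _ => ?_
      rw [Pi.smul_apply, dx, smul_eq_mul]
      rw [if_neg (fun h => h1 ?_), mul_zero]
      have hmk : m = k := by rw [h] at hm; simpa using hm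
      rw [h, hmk]
lemma pderiv_sign_mul (k : Fin n) (e : ℕ) (p : S n) :
    pderiv k ((-1 : S n) ^ e * p) = (-1 : S n) ^ e * pderiv k p := by
  have h : ((-1 : S n) ^ e) = MvPolynomial.C ((-1 : ℂ) ^ e) := by
    rw [map_pow, map_neg, map_one]
  rw [h, MvPolynomial.pderiv_C_mul]

lemma extd_wedge_dx (j : Fin n) (σ : Ω n) :
    extd (wedge (dx j) σ) = - wedge (dx j) (extd σ) := by
  funext K
  rw [Pi.neg_apply, wedge_dx_apply]
  by_cases hj : j ∈ K
  · rw [if_pos hj]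
    show extd (wedge (dx j) σ) K = _
    simp only [extd]
    rw [← Finset.sum_erase_add K _ hj]
    have hzero : (-1 : S n) ^ ((K.filter (fun i => i < j)).card) *
        pderiv j (wedge (dx j) σ (K.erase j)) = 0 := by
      rw [wedge_dx_apply, if_neg (Finset.notMem_erase j K), map_zero, mul_zero]
    rw [hzero, add_zero, Finset.mul_sum, ← Finset.sum_neg_distrib]
    refine Finset.sum_congr rfl fun k hk => ?_
    obtain ⟨hkj, hkK⟩ := Finset.mem_erase.mp hk
    have hjek : j ∈ K.erase k := Finset.mem_erase.mpr ⟨fun e => hkj e.symm, hj⟩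
    have hcomm : (K.erase k).erase j = (K.erase j).erase k := by
      ext x; simp only [Finset.mem_erase]; tauto
    rw [wedge_dx_apply, if_pos hjek, hcomm, pderiv_sign_mul]
    have e1 : (K.filter (fun x => x < j)).card
        = (if k < j then 1 else 0) + ((K.erase k).filter (fun x => x < j)).card :=
      card_filter_of_erase j hkK
    have e2 : (K.filter (fun x => x < k)).card
        = (if j < k then 1 else 0) + ((K.erase j).filter (fun x => x < k)).card :=
      card_filter_of_erase k hj
    have hpar : ((K.filter (fun x => x < k)).card
          + ((K.erase k).filter (fun x => x < j)).card) % 2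
        ≠ ((K.filter (fun x => x < j)).card
          + ((K.erase j).filter (fun x => x < k)).card) % 2 := by
      rcases lt_or_gt_of_ne hkj with h | h
      · rw [e1, e2, if_pos h, if_neg (not_lt_of_gt h)]; omega
      · rw [e1, e2, if_neg (not_lt_of_gt h), if_pos h]; omega
    have hsg := sign_neg_of_mod2 (n := n) hpar
    rw [← mul_assoc, ← pow_add, hsg, pow_add]
    ring
  · rw [if_neg hj, neg_zero]
    simp only [extd]
    refine Finset.sum_eq_zero fun k hk => ?_
    have : j ∉ K.erase k := fun h => hj (Finset.mem_erase.mp h).2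
    rw [wedge_dx_apply, if_neg this, map_zero, mul_zero]

lemma extd_smul_poly (f : S n) (σ : Ω n) :
    extd (f • σ) = wedge (extd (ofPoly f)) σ + f • extd σ := by
  funext I
  rw [Pi.add_apply, extd_ofPoly, wedge_sum_left, Finset.sum_apply]
  have hR1 : ∀ k, wedge (pderiv k f • dx k) σ I
      = if k ∈ I then pderiv k f *
          ((-1 : S n) ^ ((I.filter (fun x => x < k)).card) * σ (I.erase k)) else 0 := by
    intro k
    rw [wedge_smulS_left, Pi.smul_apply, smul_eq_mul, wedge_dx_apply]
    split <;> [rfl; exact mul_zero _]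
  rw [Finset.sum_congr rfl fun k _ => hR1 k, Finset.sum_ite_mem, Finset.univ_inter]
  show extd (f • σ) I = _ + (f • extd σ) I
  simp only [extd, Pi.smul_apply, smul_eq_mul, Finset.mul_sum, ← Finset.sum_add_distrib]
  refine Finset.sum_congr rfl fun k hk => ?_
  rw [MvPolynomial.pderiv_mul]
  ring

lemma wedge_dx_dxI {j : Fin n} {I : Finset (Fin n)} (hj : j ∉ I) :
    wedge (dx j) (dxI I) = ((-1 : ℂ) ^ ((I.filter (fun x => x < j)).card)) • dxI (insert j I) := by
  funext K
  rw [Pi.smul_apply, csmul_eq, wedge_dx_apply]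
  simp only [dxI]
  by_cases hjK : j ∈ K
  · rw [if_pos hjK]
    by_cases h : K.erase j = I
    · have hK : K = insert j I := by rw [← h, Finset.insert_erase hjK]
      rw [if_pos h, if_pos hK, mul_one, mul_one, hK,
        card_filter_insert j hj, if_neg (lt_irrefl j), zero_add]
    · have hK : K ≠ insert j I := by
        intro e; exact h (by rw [e, Finset.erase_insert hj])
      rw [if_neg h, if_neg hK, mul_zero, mul_zero]
  · have hK : K ≠ insert j I := by
      intro e; exact hjK (e ▸ Finset.mem_insert_self j I)
    rw [if_neg hjK, if_neg hK, mul_zero]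

lemma dxI_insert {j : Fin n} {I : Finset (Fin n)} (hj : j ∉ I) :
    dxI (insert j I) = ((-1 : ℂ) ^ ((I.filter (fun x => x < j)).card)) • wedge (dx j) (dxI I) := by
  rw [wedge_dx_dxI hj, smul_smul, ← pow_add]
  rw [Even.neg_one_pow ⟨_, rfl⟩, one_smul]
/-! ### integer sign helpers -/

lemma zsgn_mul_self (z : ℤ) : ((-1 : ℂ) ^ z) * ((-1 : ℂ) ^ z) = 1 := by
  rw [← zpow_add₀ (by norm_num : (-1 : ℂ) ≠ 0)]
  exact Even.neg_one_zpow ⟨z, rfl⟩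

lemma zsgn_smul_self (z : ℤ) (x : Ω n) : ((-1 : ℂ) ^ z) • ((-1 : ℂ) ^ z) • x = x := by
  rw [smul_smul, zsgn_mul_self, one_smul]

lemma wedge_commZ {a b : Ω n} {z : ℤ} {s : ℕ} (ha : IsFormZ a z) (hb : IsForm b s) :
    wedge a b = ((-1 : ℂ) ^ (z * (s : ℤ))) • wedge b a := by
  rcases lt_or_ge z 0 with hz | hz
  · rw [ha.eq_zero hz, wedge_zero_left, wedge_zero_right, smul_zero]
  · obtain ⟨r, rfl⟩ := Int.eq_ofNat_of_zero_le hz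
    have hc : ((-1 : ℂ) ^ ((r : ℤ) * (s : ℤ))) = (-1 : ℂ) ^ (r * s) := by
      rw [← Nat.cast_mul, zpow_natCast]
    rw [hc]
    exact wedge_comm (IsForm_of_IsFormZ ha) hb

/-! ### contraction of basic forms -/

lemma contr_sum {ι : Type*} (X : Fin n → S n) (s : Finset ι) (f : ι → Ω n) :
    contr X (∑ i ∈ s, f i) = ∑ i ∈ s, contr X (f i) := by
  induction s using Finset.cons_induction with
  | empty => simp [contr_zero]
  | cons i s hi ih => rw [Finset.sum_cons, contr_add, ih, Finset.sum_cons]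

lemma extd_sum {ι : Type*} (s : Finset ι) (f : ι → Ω n) :
    extd (∑ i ∈ s, f i) = ∑ i ∈ s, extd (f i) := by
  induction s using Finset.cons_induction with
  | empty => simp [extd_zero]
  | cons i s hi ih => rw [Finset.sum_cons, extd_add, ih, Finset.sum_cons]

lemma contr_dx (k m : Fin n) :
    contr (coordVF n k) (dx m) = if m = k then oneForm n else 0 := by
  have h := contr_wedge_dx k m (oneForm n)
  rw [wedge_oneForm_right, contr_oneForm, wedge_zero_right, sub_zero] at h
  exact h

lemma vcontr_dx (M : Fin n → Ω n) (j : Fin n) : vcontr M (dx j) = M j := by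
  rw [vcontr, Finset.sum_eq_single j]
  · rw [contr_dx, if_pos rfl, wedge_oneForm_right]
  · intro k _ hk
    rw [contr_dx, if_neg (fun e => hk e.symm), wedge_zero_right]
  · intro h; exact absurd (Finset.mem_univ j) h

lemma vcontr_oneForm (M : Fin n → Ω n) : vcontr M (oneForm n) = 0 := by
  rw [vcontr]
  refine Finset.sum_eq_zero fun k _ => ?_
  rw [contr_oneForm, wedge_zero_right]

lemma vcontr_ofPoly (M : Fin n → Ω n) (f : S n) : vcontr M (ofPoly f) = 0 := by
  rw [vcontr]
  refine Finset.sum_eq_zero fun k _ => ?_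
  rw [contr_ofPoly, wedge_zero_right]

lemma contr_wedge_extd_ofPoly (k : Fin n) (f : S n) (τ : Ω n) :
    contr (coordVF n k) (wedge (extd (ofPoly f)) τ)
      = pderiv k f • τ - wedge (extd (ofPoly f)) (contr (coordVF n k) τ) := by
  rw [extd_ofPoly, wedge_sum_left, contr_sum, wedge_sum_left]
  have h1 : ∀ m, contr (coordVF n k) (wedge (pderiv m f • dx m) τ)
      = pderiv m f • (if m = k then τ else 0)
        - wedge (pderiv m f • dx m) (contr (coordVF n k) τ) := by
    intro m
    rw [wedge_smulS_left, contr_smulS, contr_wedge_dx, smul_sub, wedge_smulS_left]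
  rw [Finset.sum_congr rfl fun m _ => h1 m, Finset.sum_sub_distrib]
  congr 1
  rw [Finset.sum_eq_single k]
  · rw [if_pos rfl]
  · intro m _ hm; rw [if_neg hm, smul_zero]
  · intro h; exact absurd (Finset.mem_univ k) h

/-! ### Leibniz rule for the exterior differential -/

lemma extd_wedge_dxI (I : Finset (Fin n)) (τ : Ω n) :
    extd (wedge (dxI I) τ) = ((-1 : ℂ) ^ I.card) • wedge (dxI I) (extd τ) := by
  induction I using Finset.induction_on with
  | empty => rw [dxI_empty, wedge_oneForm_left, wedge_oneForm_left]; simp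
  | @insert j I hj ih =>
    simp only [dxI_insert hj, Finset.card_insert_of_notMem hj, wedge_smulC_left,
      extd_smulC, wedge_assoc, extd_wedge_dx, ih, wedge_smulC_right, pow_succ]
    module
lemma smul_comm_CS (c : ℂ) (f : S n) (x : Ω n) : c • f • x = f • c • x := by
  funext I
  simp only [Pi.smul_apply, MvPolynomial.smul_eq_C_mul, smul_eq_mul]
  ring

lemma wedge_sub_right (a b c : Ω n) : wedge a (b - c) = wedge a b - wedge a c := by
  funext K; simp only [wedge, Pi.sub_apply, ← Finset.sum_sub_distrib]
  exact Finset.sum_congr rfl fun I _ => by ring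

lemma wedge_sub_left (a b c : Ω n) : wedge (a - b) c = wedge a c - wedge b c := by
  funext K; simp only [wedge, Pi.sub_apply, ← Finset.sum_sub_distrib]
  exact Finset.sum_congr rfl fun I _ => by ring

lemma extd_wedge {μ : Ω n} {r : ℕ} (hμ : IsForm μ r) (τ : Ω n) :
    extd (wedge μ τ) = wedge (extd μ) τ + ((-1 : ℂ) ^ r) • wedge μ (extd τ) := by
  conv_lhs => rw [eq_sum_dxI μ]
  conv_rhs => rw [eq_sum_dxI μ]
  rw [wedge_sum_left, extd_sum, extd_sum, wedge_sum_left, wedge_sum_left,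
    Finset.smul_sum, ← Finset.sum_add_distrib]
  refine Finset.sum_congr rfl fun I _ => ?_
  rw [wedge_smulS_left, extd_smul_poly, extd_smul_poly, extd_dxI, smul_zero, add_zero,
    extd_wedge_dxI, wedge_assoc, wedge_smulS_left]
  congr 1
  by_cases h : μ I = 0
  · simp [h]
  · have hc : I.card = r := by by_contra hc; exact h (hμ I hc)
    rw [hc, ← smul_comm_CS]

lemma extd_wedgeZ {μ : Ω n} {z : ℤ} (hμ : IsFormZ μ z) (τ : Ω n) :
    extd (wedge μ τ) = wedge (extd μ) τ + ((-1 : ℂ) ^ z) • wedge μ (extd τ) := by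
  rcases lt_or_ge z 0 with hz | hz
  · rw [hμ.eq_zero hz, wedge_zero_left, extd_zero, wedge_zero_left, wedge_zero_left,
      smul_zero, add_zero]
  · obtain ⟨r, rfl⟩ := Int.eq_ofNat_of_zero_le hz
    rw [zpow_natCast]
    exact extd_wedge (IsForm_of_IsFormZ hμ) τ

lemma IsForm_extd_ofPoly (f : S n) : IsForm (extd (ofPoly f)) 1 := by
  have h := IsFormZ_extd (IsFormZ_of_IsForm (IsForm_ofPoly f))
  rw [show ((0 : ℕ) : ℤ) + 1 = ((1 : ℕ) : ℤ) by norm_num] at h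
  exact IsForm_of_IsFormZ h

lemma vcontr_wedge_dx {M : Fin n → Ω n} {m : ℤ} (hM : ∀ k, IsFormZ (M k) m)
    (j : Fin n) (ρ : Ω n) :
    vcontr M (wedge (dx j) ρ)
      = wedge (M j) ρ - ((-1 : ℂ) ^ m) • wedge (dx j) (vcontr M ρ) := by
  show (∑ k, wedge (M k) (contr (coordVF n k) (wedge (dx j) ρ))) = _
  have h1 : ∀ k, wedge (M k) (contr (coordVF n k) (wedge (dx j) ρ))
      = wedge (M k) (if j = k then ρ else 0)
        - ((-1 : ℂ) ^ m) • wedge (dx j) (wedge (M k) (contr (coordVF n k) ρ)) := by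
    intro k
    rw [contr_wedge_dx, wedge_sub_right]
    congr 1
    rw [← wedge_assoc, wedge_commZ (hM k) (IsForm_dx j), Nat.cast_one, mul_one, wedge_smulC_left,
      wedge_assoc]
  rw [Finset.sum_congr rfl fun k _ => h1 k, Finset.sum_sub_distrib]
  congr 1
  · rw [Finset.sum_eq_single j]
    · rw [if_pos rfl]
    · intro k _ hk; rw [if_neg (fun e => hk e.symm), wedge_zero_right]
    · intro h; exact absurd (Finset.mem_univ j) h
  · rw [← Finset.smul_sum, ← wedge_sum_right]
    rfl

lemma vcontr_wedge_df {M : Fin n → Ω n} {m : ℤ} (hM : ∀ k, IsFormZ (M k) m)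
    (f : S n) (τ : Ω n) :
    vcontr M (wedge (extd (ofPoly f)) τ)
      = (∑ k, pderiv k f • wedge (M k) τ)
        - ((-1 : ℂ) ^ m) • wedge (extd (ofPoly f)) (vcontr M τ) := by
  show (∑ k, wedge (M k) (contr (coordVF n k) (wedge (extd (ofPoly f)) τ))) = _
  have h1 : ∀ k, wedge (M k) (contr (coordVF n k) (wedge (extd (ofPoly f)) τ))
      = pderiv k f • wedge (M k) τ
        - ((-1 : ℂ) ^ m) • wedge (extd (ofPoly f)) (wedge (M k) (contr (coordVF n k) τ)) := by
    intro k
    rw [contr_wedge_extd_ofPoly, wedge_sub_right, wedge_smulS_right]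
    congr 1
    rw [← wedge_assoc, wedge_commZ (hM k) (IsForm_extd_ofPoly f), Nat.cast_one, mul_one,
      wedge_smulC_left, wedge_assoc]
  rw [Finset.sum_congr rfl fun k _ => h1 k, Finset.sum_sub_distrib]
  congr 1
  rw [← Finset.smul_sum, ← wedge_sum_right]
  rfl
lemma negC (x : Ω n) : -x = (-1 : ℂ) • x := by
  funext I
  simp only [Pi.neg_apply, Pi.smul_apply, MvPolynomial.smul_eq_C_mul, map_neg, map_one]
  ring

lemma zsgn_cases (z : ℤ) : ((-1 : ℂ) ^ z = 1) ∨ ((-1 : ℂ) ^ z = -1) := by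
  rcases Int.even_or_odd z with h | h
  · exact Or.inl (Even.neg_one_zpow h)
  · exact Or.inr (Odd.neg_one_zpow h)

/-- The combined operator `L_K + i_L + λ_ν`. -/
def Pop (q : ℤ) (K L : Fin n → Ω n) (ν : Ω n) (τ : Ω n) : Ω n :=
  lieD q K τ + vcontr L τ + wedge ν τ

lemma ofPoly_eq_smul_one (f : S n) : ofPoly f = f • oneForm n := by
  funext I
  simp only [ofPoly, oneForm, Pi.smul_apply, smul_eq_mul]
  split <;> simp

lemma smul_ofPoly (f g : S n) : f • ofPoly g = ofPoly (f * g) := by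
  funext I
  simp only [ofPoly, Pi.smul_apply, smul_eq_mul]
  split <;> simp

lemma contr_extd_ofPoly (k : Fin n) (f : S n) :
    contr (coordVF n k) (extd (ofPoly f)) = ofPoly (pderiv k f) := by
  have h := contr_wedge_extd_ofPoly k f (oneForm n)
  rw [wedge_oneForm_right, contr_oneForm, wedge_zero_right, sub_zero] at h
  rw [h, ofPoly_eq_smul_one]

lemma lieD_add (q : ℤ) (K : Fin n → Ω n) (a b : Ω n) :
    lieD q K (a + b) = lieD q K a + lieD q K b := by
  simp only [lieD, extd_add, vcontr_add, smul_add]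
  abel

lemma lieD_smulC (q : ℤ) (K : Fin n → Ω n) (c : ℂ) (a : Ω n) :
    lieD q K (c • a) = c • lieD q K a := by
  simp only [lieD, extd_smulC, vcontr_smulC, smul_add, smul_comm c]

lemma Pop_add (q : ℤ) (K L : Fin n → Ω n) (ν : Ω n) (a b : Ω n) :
    Pop q K L ν (a + b) = Pop q K L ν a + Pop q K L ν b := by
  simp only [Pop, lieD_add, vcontr_add, wedge_add_right]
  abel

lemma Pop_smulC (q : ℤ) (K L : Fin n → Ω n) (ν : Ω n) (c : ℂ) (a : Ω n) :
    Pop q K L ν (c • a) = c • Pop q K L ν a := by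
  simp only [Pop, lieD_smulC, vcontr_smulC, wedge_smulC_right, smul_add]

lemma Pop_oneForm (q : ℤ) (K L : Fin n → Ω n) (ν : Ω n) :
    Pop q K L ν (oneForm n) = ν := by
  simp only [Pop, lieD, extd_oneForm, vcontr_zero, vcontr_oneForm, extd_zero, smul_zero,
    wedge_oneForm_right, zero_add, add_zero]

lemma Pop_poly (q : ℤ) (K L : Fin n → Ω n) (ν : Ω n) (f : S n) :
    Pop q K L ν (ofPoly f) = (∑ k, pderiv k f • K k) + f • ν := by
  simp only [Pop, lieD, vcontr_ofPoly, extd_zero, smul_zero, add_zero, wedge_ofPoly_right]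
  congr 1
  rw [vcontr]
  refine Finset.sum_congr rfl fun k _ => ?_
  rw [contr_extd_ofPoly, wedge_ofPoly_right]

lemma Pop_dx (q : ℤ) (K L : Fin n → Ω n) (ν : Ω n) (j : Fin n) :
    Pop q K L ν (dx j) = ((-1 : ℂ) ^ q) • extd (K j) + L j + wedge ν (dx j) := by
  simp only [Pop, lieD, extd_dx, vcontr_zero, vcontr_dx, zero_add]
lemma extd_sub (a b : Ω n) : extd (a - b) = extd a - extd b := by
  funext I; simp only [extd, Pi.sub_apply, map_sub, ← Finset.sum_sub_distrib]
  exact Finset.sum_congr rfl fun k _ => by ring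

lemma zsgn_succ (q : ℤ) : (-1 : ℂ) ^ (q + 1) = (-1 : ℂ) ^ q * (-1) :=
  zpow_add_one₀ (by norm_num) q

section Hex

variable {q : ℤ} {D : Ω n → Ω n}

lemma hexD {μ τ : Ω n} {r s : ℕ} (hD : IsDiffOpOfDegree D q)
    (hμ : IsForm μ r) (hτ : IsForm τ s) :
    D (wedge μ τ) = ((-1 : ℂ) ^ (q * (r : ℤ))) • wedge μ (D τ)
      + ((-1 : ℂ) ^ ((q + (r : ℤ)) * (s : ℤ))) •
          (wedge τ (D μ) - ((-1 : ℂ) ^ (q * (r : ℤ))) • wedge τ (wedge μ (D (oneForm n)))) := by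
  have h := hD.order_one r s μ τ hμ hτ (oneForm n)
  simp only [wedge_oneForm_right] at h
  rw [sub_sub, sub_eq_zero] at h
  exact h

lemma hexD_poly (hD : IsDiffOpOfDegree D q) (f : S n) {τ : Ω n} {s : ℕ} (hτ : IsForm τ s) :
    D (wedge (ofPoly f) τ) = wedge (ofPoly f) (D τ)
      + ((-1 : ℂ) ^ (q * (s : ℤ))) •
          (wedge τ (D (ofPoly f)) - wedge τ (wedge (ofPoly f) (D (oneForm n)))) := by
  have h := hexD hD (IsForm_ofPoly f) hτ
  simp only [Nat.cast_zero, mul_zero, zpow_zero, one_smul, add_zero] at h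
  exact h

lemma hexD_dx (hD : IsDiffOpOfDegree D q) (j : Fin n) {τ : Ω n} {s : ℕ} (hτ : IsForm τ s) :
    D (wedge (dx j) τ) = ((-1 : ℂ) ^ q) • wedge (dx j) (D τ)
      + ((-1 : ℂ) ^ ((q + 1) * (s : ℤ))) •
          (wedge τ (D (dx j))
            - ((-1 : ℂ) ^ q) • wedge τ (wedge (dx j) (D (oneForm n)))) := by
  have h := hexD hD (IsForm_dx j) hτ
  simp only [Nat.cast_one, mul_one] at h
  exact h

variable {K L : Fin n → Ω n} {ν : Ω n}

lemma Pop_smul_poly (hK : ∀ k, IsFormZ (K k) q) (f : S n) (τ : Ω n) :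
    Pop q K L ν (f • τ) = f • Pop q K L ν τ + ∑ k, pderiv k f • wedge (K k) τ := by
  have hlie : lieD q K (f • τ) = f • lieD q K τ + ∑ k, pderiv k f • wedge (K k) τ := by
    rw [lieD, extd_smul_poly, vcontr_add, vcontr_wedge_df hK, vcontr_smulS,
      vcontr_smulS, extd_smul_poly, smul_add, lieD, smul_add,
      ← smul_comm_CS]
    abel
  simp only [Pop, hlie, vcontr_smulS, wedge_smulS_right, smul_add]
  abel

lemma hexP_poly (hK : ∀ k, IsFormZ (K k) q) (f : S n) {τ : Ω n} {s : ℕ} (hτ : IsForm τ s) :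
    Pop q K L ν (wedge (ofPoly f) τ) = wedge (ofPoly f) (Pop q K L ν τ)
      + ((-1 : ℂ) ^ (q * (s : ℤ))) •
          (wedge τ (Pop q K L ν (ofPoly f))
            - wedge τ (wedge (ofPoly f) (Pop q K L ν (oneForm n)))) := by
  rw [Pop_oneForm, Pop_poly, wedge_ofPoly_left f τ, Pop_smul_poly hK,
    wedge_ofPoly_left f (Pop q K L ν τ), wedge_ofPoly_left f ν, wedge_add_right,
    add_sub_cancel_right, wedge_sum_right]
  congr 1
  have h1 : ∀ k : Fin n, pderiv k f • wedge (K k) τ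
      = ((-1 : ℂ) ^ (q * (s : ℤ))) • (pderiv k f • wedge τ (K k)) := by
    intro k
    rw [wedge_commZ (hK k) hτ, ← smul_comm_CS]
  rw [Finset.sum_congr rfl fun k _ => h1 k, ← Finset.smul_sum]
  congr 1
  exact Finset.sum_congr rfl fun k _ => (wedge_smulS_right _ _ _).symm

lemma hexP_dx (hK : ∀ k, IsFormZ (K k) q) (hL : ∀ k, IsFormZ (L k) (q + 1))
    (hν : IsFormZ ν q) (j : Fin n) {τ : Ω n} {s : ℕ} (hτ : IsForm τ s) :
    Pop q K L ν (wedge (dx j) τ) = ((-1 : ℂ) ^ q) • wedge (dx j) (Pop q K L ν τ)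
      + ((-1 : ℂ) ^ ((q + 1) * (s : ℤ))) •
          (wedge τ (Pop q K L ν (dx j))
            - ((-1 : ℂ) ^ q) • wedge τ (wedge (dx j) (Pop q K L ν (oneForm n)))) := by
  rw [Pop_oneForm, Pop_dx]
  have hlam : wedge ν (wedge (dx j) τ) = ((-1 : ℂ) ^ q) • wedge (dx j) (wedge ν τ) := by
    rw [← wedge_assoc, wedge_commZ hν (IsForm_dx j), Nat.cast_one, mul_one,
      wedge_smulC_left, wedge_assoc]
  have hνdx : wedge ν (dx j) = ((-1 : ℂ) ^ q) • wedge (dx j) ν := by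
    rw [wedge_commZ hν (IsForm_dx j), Nat.cast_one, mul_one]
  have hTA : wedge (extd (K j)) τ = ((-1 : ℂ) ^ ((q + 1) * (s : ℤ))) • wedge τ (extd (K j)) :=
    wedge_commZ (IsFormZ_extd (hK j)) hτ
  have hTL : wedge (L j) τ = ((-1 : ℂ) ^ ((q + 1) * (s : ℤ))) • wedge τ (L j) :=
    wedge_commZ (hL j) hτ
  have hKT : wedge (K j) τ = ((-1 : ℂ) ^ (q * (s : ℤ))) • wedge τ (K j) :=
    wedge_commZ (hK j) hτ
  simp only [Pop, lieD, extd_wedge_dx, negC, vcontr_smulC, vcontr_wedge_dx hK,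
    vcontr_wedge_dx hL, extd_sub, extd_smulC, extd_wedgeZ (hK j), hlam, hνdx, hTA, hTL,
    zsgn_succ, smul_sub, smul_add, wedge_add_right, wedge_sub_right, wedge_smulC_right,
    wedge_smulC_left, mul_smul, Pop_dx]
  obtain hc | hc := zsgn_cases q <;>
    obtain hd | hd := zsgn_cases ((q + 1) * (s : ℤ)) <;>
      rw [hc, hd] <;> module

end Hex
lemma ofPoly_C (a : ℂ) : ofPoly (MvPolynomial.C a : S n) = a • oneForm n := by
  funext I
  simp only [ofPoly, oneForm, Pi.smul_apply, MvPolynomial.smul_eq_C_mul]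
  split <;> simp

lemma ofPoly_add (f g : S n) : ofPoly (f + g) = ofPoly f + ofPoly g := by
  funext I
  simp only [ofPoly, Pi.add_apply]
  split <;> simp

lemma wedge_ofPoly_ofPoly (f g : S n) :
    wedge (ofPoly f) (ofPoly g) = ofPoly (f * g) := by
  rw [wedge_ofPoly_left, smul_ofPoly]

lemma Pop_zero (q : ℤ) (K L : Fin n → Ω n) (ν : Ω n) : Pop q K L ν 0 = 0 := by
  simp only [Pop, lieD, extd_zero, vcontr_zero, smul_zero, wedge_zero_right, add_zero]

lemma Pop_sum (q : ℤ) (K L : Fin n → Ω n) (ν : Ω n) {ι : Type*} (s : Finset ι)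
    (g : ι → Ω n) : Pop q K L ν (∑ i ∈ s, g i) = ∑ i ∈ s, Pop q K L ν (g i) := by
  induction s using Finset.cons_induction with
  | empty => simp [Pop_zero]
  | cons i s hi ih => rw [Finset.sum_cons, Pop_add, ih, Finset.sum_cons]

lemma IsFormZ_congr {a : Ω n} {z w : ℤ} (h : z = w) (ha : IsFormZ a z) : IsFormZ a w :=
  h ▸ ha

theorem diffOp_decomposition' (n : ℕ) (q : ℤ) (D : Ω n → Ω n)
    (hD : IsDiffOpOfDegree D q) :
    ∃! KLμ : (Fin n → Ω n) × (Fin n → Ω n) × Ω n,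
      (∀ k, IsFormZ (KLμ.1 k) q) ∧ (∀ k, IsFormZ (KLμ.2.1 k) (q + 1)) ∧
      IsFormZ KLμ.2.2 q ∧
      ∀ τ : Ω n, D τ = lieD q KLμ.1 τ + vcontr KLμ.2.1 τ + wedge KLμ.2.2 τ := by
  classical
  set ν : Ω n := D (oneForm n) with hνdef
  set K : Fin n → Ω n := fun j => D (ofPoly (MvPolynomial.X j)) - (MvPolynomial.X j : S n) • ν
    with hKdef
  set L : Fin n → Ω n :=
    fun j => D (dx j) - ((-1 : ℂ) ^ q) • extd (K j) - wedge ν (dx j) with hLdef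
  -- degrees
  have hν : IsFormZ ν q := by
    have h := hD.map_degree 0 (oneForm n) IsForm_oneForm
    exact IsFormZ_congr (by norm_num) h
  have hK : ∀ j, IsFormZ (K j) q := by
    intro j
    have h1 := hD.map_degree 0 (ofPoly (MvPolynomial.X j)) (IsForm_ofPoly _)
    have h1' : IsFormZ (D (ofPoly (MvPolynomial.X j))) q := IsFormZ_congr (by norm_num) h1
    exact h1'.sub (hν.smulS _)
  have hL : ∀ j, IsFormZ (L j) (q + 1) := by
    intro j
    have h1 := hD.map_degree 1 (dx j) (IsForm_dx j)
    have h1' : IsFormZ (D (dx j)) (q + 1) := IsFormZ_congr (by omega) h1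
    have h2 : IsFormZ (extd (K j)) (q + 1) := IsFormZ_extd (hK j)
    have h3 : IsFormZ (wedge ν (dx j)) (q + 1) := by
      have := IsFormZ_wedge hν (IsFormZ_of_IsForm (IsForm_dx j))
      exact IsFormZ_congr (by norm_num) this
    exact (h1'.sub (h2.smulC _)).sub h3
  -- base cases
  have hone : D (oneForm n) = Pop q K L ν (oneForm n) := by rw [Pop_oneForm]
  have hx : ∀ j, D (ofPoly (MvPolynomial.X j)) = Pop q K L ν (ofPoly (MvPolynomial.X j)) := by
    intro j
    rw [Pop_poly]
    have hsum : (∑ k, pderiv k (MvPolynomial.X j : S n) • K k) = K j := by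
      rw [Finset.sum_eq_single j]
      · rw [MvPolynomial.pderiv_X_self, one_smul]
      · intro k _ hk
        rw [MvPolynomial.pderiv_X_of_ne (Ne.symm hk) , zero_smul]
      · intro h; exact absurd (Finset.mem_univ j) h
    rw [hsum]
    show D (ofPoly (MvPolynomial.X j))
      = (D (ofPoly (MvPolynomial.X j)) - (MvPolynomial.X j : S n) • ν)
        + (MvPolynomial.X j : S n) • ν
    abel
  have hdx : ∀ j, D (dx j) = Pop q K L ν (dx j) := by
    intro j
    rw [Pop_dx]
    show D (dx j) = ((-1 : ℂ) ^ q) • extd (K j)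
      + (D (dx j) - ((-1 : ℂ) ^ q) • extd (K j) - wedge ν (dx j)) + wedge ν (dx j)
    abel
  -- polynomials
  have hpoly : ∀ f : S n, D (ofPoly f) = Pop q K L ν (ofPoly f) := by
    intro f
    induction f using MvPolynomial.induction_on with
    | C a =>
      rw [ofPoly_C, hD.map_smul, Pop_smulC, hone]
    | add p p' ihp ihp' =>
      rw [ofPoly_add, hD.map_add, Pop_add, ihp, ihp']
    | mul_X p i ih =>
      rw [← wedge_ofPoly_ofPoly, hexD_poly hD p (IsForm_ofPoly (MvPolynomial.X i)),
        hexP_poly hK p (IsForm_ofPoly (MvPolynomial.X i)), ih, hx i, hone]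
  -- basis monomials
  have hdxI : ∀ I : Finset (Fin n), D (dxI I) = Pop q K L ν (dxI I) := by
    intro I
    induction I using Finset.induction_on with
    | empty => rw [dxI_empty]; exact hone
    | @insert j I hj ih =>
      rw [dxI_insert hj, hD.map_smul, Pop_smulC, hexD_dx hD j (IsForm_dxI I),
        hexP_dx hK hL hν j (IsForm_dxI I), ih, hdx j, hone]
  -- sums
  have hD0 : D 0 = 0 := by
    have := hD.map_add 0 0
    rw [add_zero] at this
    exact left_eq_add.mp this
  have hDsum : ∀ {ι : Type} (s : Finset ι) (g : ι → Ω n),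
      D (∑ i ∈ s, g i) = ∑ i ∈ s, D (g i) := by
    intro ι s g
    induction s using Finset.cons_induction with
    | empty => simpa using hD0
    | cons i s hi ih => rw [Finset.sum_cons, hD.map_add, ih, Finset.sum_cons]
  have hbasis : ∀ (f : S n) (I : Finset (Fin n)),
      D (f • dxI I) = Pop q K L ν (f • dxI I) := by
    intro f I
    rw [← wedge_ofPoly_left, hexD_poly hD f (IsForm_dxI I),
      hexP_poly hK f (IsForm_dxI I), hpoly f, hdxI I, hone]
  have key : ∀ τ : Ω n, D τ = Pop q K L ν τ := by
    intro τ
    conv_lhs => rw [eq_sum_dxI τ]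
    conv_rhs => rw [eq_sum_dxI τ]
    rw [hDsum, Pop_sum]
    exact Finset.sum_congr rfl fun I _ => hbasis (τ I) I
  refine ⟨⟨K, L, ν⟩, ⟨hK, hL, hν, fun τ => key τ⟩, ?_⟩
  rintro ⟨K', L', ν'⟩ ⟨hK', hL', hν', hft⟩
  have hPP : ∀ τ, Pop q K' L' ν' τ = Pop q K L ν τ := by
    intro τ
    rw [← key τ]
    exact (hft τ).symm
  have hnu : ν' = ν := by
    have := hPP (oneForm n)
    rwa [Pop_oneForm, Pop_oneForm] at this
  have hKK : K' = K := by
    funext j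
    have h := hPP (ofPoly (MvPolynomial.X j))
    rw [Pop_poly, Pop_poly, hnu] at h
    have hcol : ∀ M : Fin n → Ω n, (∑ k, pderiv k (MvPolynomial.X j : S n) • M k) = M j := by
      intro M
      rw [Finset.sum_eq_single j]
      · rw [MvPolynomial.pderiv_X_self, one_smul]
      · intro k _ hk
        rw [MvPolynomial.pderiv_X_of_ne (Ne.symm hk), zero_smul]
      · intro h; exact absurd (Finset.mem_univ j) h
    rw [hcol K', hcol K] at h
    exact add_right_cancel h
  have hLL : L' = L := by
    funext j
    have h := hPP (dx j)
    rw [Pop_dx, Pop_dx, hnu, hKK] at h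
    have h2 := add_right_cancel h
    exact add_left_cancel h2
  rw [hKK, hLL, hnu]

end

/-- Every differential operator `D` of order `1` and degree `q` on `Ω`
can be written uniquely as `D = L_K + i_L + λ_μ`, with `K ∈ Ω^q ⊗_S T`,
`L ∈ Ω^{q+1} ⊗_S T` (encoded by components), `μ ∈ Ω^q`, `L_K = [i_K, d]`, and `λ_μ`
left exterior multiplication by `μ`. -/
theorem diffOp_decomposition (n : ℕ) (q : ℤ) (D : Ω n → Ω n)
    (hD : IsDiffOpOfDegree D q) :
    ∃! KLμ : (Fin n → Ω n) × (Fin n → Ω n) × Ω n,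
      (∀ k, IsFormZ (KLμ.1 k) q) ∧ (∀ k, IsFormZ (KLμ.2.1 k) (q + 1)) ∧
      IsFormZ KLμ.2.2 q ∧
      ∀ τ : Ω n, D τ = lieD q KLμ.1 τ + vcontr KLμ.2.1 τ + wedge KLμ.2.2 τ := by
  exact diffOp_decomposition' n q D hD
end

section
/- In Ω over S = ℂ[x,y,z] with the deformed action f·_d τ := (b/(b+c))·(fτ + (1/b)·df∧i_Rτ), one has (z·_d dx)∧dy ≠ dx∧(z·_d dy); explicitly, z·_d dx = (1/2)(z dx + x dz), so (z·_d dx)∧dy = (1/2)(z dx∧dy + x dz∧dy) while dx∧(z·_d dy) = (1/2)(z dx∧dy + y dx∧dz), and these two 2-forms are distinct. In particular the deformed module of 2-forms is not the exterior square of the deformed module of 1-forms. -/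
/-!
Common setup: a concrete model of the exterior algebra `Ω` of differential forms over
`S = ℂ[x₁,…,xₙ]`.  An element of `Ω` is encoded as a function assigning to each subset
`I ⊆ {1,…,n}` the polynomial coefficient of `dx_I = dx_{i₁} ∧ … ∧ dx_{i_r}` (indices in
increasing order).  The `r`-forms are the elements supported on subsets of cardinality `r`.
-/

open MvPolynomial

noncomputable section

variable {n : ℕ}

lemma contr_radial_dx (m : Fin 3) : contr (radial 3) (dx m) = ofPoly (X m) := by
  funext J
  fin_cases J <;> fin_cases m <;>
    simp [contr, radial, dx, ofPoly, Finset.sum_insert, Finset.sum_singleton] <;>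
    (split_ifs with h
     · exact absurd h (by decide)
     · exact Finset.sum_eq_zero fun k hk => by
        split_ifs with h2
        · have := congrArg Finset.card h2
          rw [Finset.card_insert_of_notMem (Finset.mem_compl.mp hk)] at this
          exact absurd this (by decide)
        · simp [h2])

lemma extd_ofPoly_X (k : Fin 3) : extd (ofPoly (X k : S 3)) = dx k := by
  funext I
  fin_cases I <;> fin_cases k <;>
    simp (config := { decide := true }) [extd, ofPoly, dx, Finset.sum_insert,
      Finset.sum_singleton, pderiv_X, Pi.single_apply]

lemma wedge_dx_left (k : Fin n) (τ : Ω n) (K : Finset (Fin n)) :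
    wedge (dx k) τ K =
      if {k} ⊆ K then (sgnMerge {k} (K \ {k}) : S n) * τ (K \ {k}) else 0 := by
  simp only [wedge, dx, mul_ite, ite_mul, mul_one, mul_zero, zero_mul,
    Finset.sum_ite_eq', Finset.mem_powerset]

lemma wedge_dx_ofPoly (k : Fin n) (f : S n) : wedge (dx k) (ofPoly f) = f • dx k := by
  funext K
  rw [wedge_dx_left]
  simp only [ofPoly, dx, Pi.smul_apply, smul_eq_mul, mul_ite, mul_one, mul_zero]
  by_cases hK : K = {k}
  · subst hK
    simp [sgnMerge]
  · rw [if_neg hK]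
    split_ifs with h1 h2
    · exact absurd (Finset.Subset.antisymm (Finset.sdiff_eq_empty_iff_subset.mp h2) h1) hK
    · rfl
    · rfl

lemma wedge_add_left_s15 (μ ν τ : Ω n) : wedge (μ + ν) τ = wedge μ τ + wedge ν τ := by
  funext K
  simp only [wedge, Pi.add_apply, ← Finset.sum_add_distrib]
  exact Finset.sum_congr rfl fun I _ => by ring

lemma wedge_add_right_s15 (μ ν τ : Ω n) : wedge τ (μ + ν) = wedge τ μ + wedge τ ν := by
  funext K
  simp only [wedge, Pi.add_apply, ← Finset.sum_add_distrib]
  exact Finset.sum_congr rfl fun I _ => by ring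

lemma wedge_csmul_left (a : ℂ) (μ τ : Ω n) : wedge (a • μ) τ = a • wedge μ τ := by
  funext K
  simp only [wedge, Pi.smul_apply, Finset.smul_sum, MvPolynomial.smul_eq_C_mul]
  exact Finset.sum_congr rfl fun I _ => by ring

lemma wedge_csmul_right (a : ℂ) (μ τ : Ω n) : wedge τ (a • μ) = a • wedge τ μ := by
  funext K
  simp only [wedge, Pi.smul_apply, Finset.smul_sum, MvPolynomial.smul_eq_C_mul]
  exact Finset.sum_congr rfl fun I _ => by ring

lemma wedge_psmul_left (f : S n) (μ τ : Ω n) : wedge (f • μ) τ = f • wedge μ τ := by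
  funext K
  simp only [wedge, Pi.smul_apply, smul_eq_mul, Finset.mul_sum]
  exact Finset.sum_congr rfl fun I _ => by ring

lemma wedge_psmul_right (f : S n) (μ τ : Ω n) : wedge τ (f • μ) = f • wedge τ μ := by
  funext K
  simp only [wedge, Pi.smul_apply, smul_eq_mul, Finset.mul_sum]
  exact Finset.sum_congr rfl fun I _ => by ring

lemma dotd_X2_dx (m : Fin 3) :
    dotd 1 1 (X 2 : S 3) (dx m)
      = (2⁻¹ : ℂ) • ((X 2 : S 3) • dx m + (X m : S 3) • dx 2) := by
  rw [dotd, if_neg (by norm_num), extd_ofPoly_X, contr_radial_dx, wedge_dx_ofPoly]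
  norm_num

end

/-- In `Ω` over `S = ℂ[x,y,z]` (here `x = X 0`, `y = X 1`, `z = X 2`)
with the deformed action `f ·_d τ = (b/(b+c))·(fτ + (1/b)·df∧i_Rτ)`, one has
`z ·_d dx = (1/2)(z dx + x dz)`, hence
`(z ·_d dx)∧dy = (1/2)(z dx∧dy + x dz∧dy)` while
`dx∧(z ·_d dy) = (1/2)(z dx∧dy + y dx∧dz)`, and these two `2`-forms are distinct;
in particular `(z ·_d dx)∧dy ≠ dx∧(z ·_d dy)`. -/
theorem dotd_not_compatible_with_wedge :
    dotd 1 1 (X 2 : S 3) (dx (0 : Fin 3)) =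
      (2⁻¹ : ℂ) • ((X 2 : S 3) • dx (0 : Fin 3) + (X 0 : S 3) • dx (2 : Fin 3)) ∧
    wedge (dotd 1 1 (X 2 : S 3) (dx (0 : Fin 3))) (dx (1 : Fin 3)) =
      (2⁻¹ : ℂ) • ((X 2 : S 3) • wedge (dx (0 : Fin 3)) (dx (1 : Fin 3)) +
        (X 0 : S 3) • wedge (dx (2 : Fin 3)) (dx (1 : Fin 3))) ∧
    wedge (dx (0 : Fin 3)) (dotd 1 1 (X 2 : S 3) (dx (1 : Fin 3))) =
      (2⁻¹ : ℂ) • ((X 2 : S 3) • wedge (dx (0 : Fin 3)) (dx (1 : Fin 3)) +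
        (X 1 : S 3) • wedge (dx (0 : Fin 3)) (dx (2 : Fin 3))) ∧
    wedge (dotd 1 1 (X 2 : S 3) (dx (0 : Fin 3))) (dx (1 : Fin 3)) ≠
      wedge (dx (0 : Fin 3)) (dotd 1 1 (X 2 : S 3) (dx (1 : Fin 3))) := by
  have hL : wedge (dotd 1 1 (X 2 : S 3) (dx (0 : Fin 3))) (dx (1 : Fin 3)) =
      (2⁻¹ : ℂ) • ((X 2 : S 3) • wedge (dx (0 : Fin 3)) (dx (1 : Fin 3)) +
        (X 0 : S 3) • wedge (dx (2 : Fin 3)) (dx (1 : Fin 3))) := by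
    rw [dotd_X2_dx 0, wedge_csmul_left, wedge_add_left_s15, wedge_psmul_left, wedge_psmul_left]
  have hR : wedge (dx (0 : Fin 3)) (dotd 1 1 (X 2 : S 3) (dx (1 : Fin 3))) =
      (2⁻¹ : ℂ) • ((X 2 : S 3) • wedge (dx (0 : Fin 3)) (dx (1 : Fin 3)) +
        (X 1 : S 3) • wedge (dx (0 : Fin 3)) (dx (2 : Fin 3))) := by
    rw [dotd_X2_dx 1, wedge_csmul_right, wedge_add_right_s15, wedge_psmul_right, wedge_psmul_right]
  refine ⟨dotd_X2_dx 0, hL, hR, ?_⟩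
  intro h
  have h5 := congrFun h ({0, 2} : Finset (Fin 3))
  rw [hL, hR] at h5
  simp (config := { decide := true }) [wedge_dx_left, dx, Pi.smul_apply, Pi.add_apply,
    smul_eq_mul, sgnMerge, Finset.sum_singleton, Finset.filter_singleton] at h5
  exact smul_ne_zero (by norm_num) (MvPolynomial.X_ne_zero 1) h5.symm
end
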